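/- Let q be a prime power, let n ≥ 2, and let B be a nondegenerate alternating bilinear form on 𝔽_q^{2n+2}, defining the symplectic polar space W(2n+1,q). Let 𝒪 be an m-ovoid of W(2n+1,q) with m ≥ 1, and let W be a 2n-dimensional vector subspace of 𝔽_q^{2n+2} on which B restricts to a nondegenerate alternating form (a W(2n−1,q) section). Let c be the number of projective points of the 2-dimensional subspace W^⊥ that belong to 𝒪; then 0 ≤ c ≤ q+1 and the number of projective points of W belonging to 𝒪 equals (m−c)q^{n−1}+m. -/

import Mathlib

open Module Set

/-- The projective points of `PG(V)`: one-dimensional subspaces of `V`. -/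
def ProjPoints (F V : Type) [Field F] [AddCommGroup V] [Module F V] :
    Set (Submodule F V) :=
  {p | ∃ v : V, v ≠ 0 ∧ p = Submodule.span F {v}}

/-- A subspace `W` is totally isotropic for the bilinear form `B`. -/
def TotallyIsotropic {F V : Type} [Field F] [AddCommGroup V] [Module F V]
    (B : LinearMap.BilinForm F V) (W : Submodule F V) : Prop :=
  ∀ v ∈ W, ∀ w ∈ W, B v w = 0

/-- A generator of the symplectic polar space defined by `B`: a totally isotropic
subspace of maximal vector dimension. -/
def IsSympGenerator {F V : Type} [Field F] [AddCommGroup V] [Module F V]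
    (B : LinearMap.BilinForm F V) (G : Submodule F V) : Prop :=
  TotallyIsotropic B G ∧
    ∀ G' : Submodule F V, TotallyIsotropic B G' →
      Module.finrank F G' ≤ Module.finrank F G

/-- An `m`-ovoid of the symplectic polar space defined by `B`: a set of projective
points such that every generator contains exactly `m` of them. -/
def IsSympMOvoid {F V : Type} [Field F] [AddCommGroup V] [Module F V]
    (B : LinearMap.BilinForm F V) (m : ℕ) (O : Set (Submodule F V)) : Prop :=
  O ⊆ ProjPoints F V ∧
    ∀ G : Submodule F V, IsSympGenerator B G → (O ∩ {p | p ≤ G}).ncard = m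

namespace MOvoidAux

variable {F V : Type} [Field F] [AddCommGroup V] [Module F V]

/-- skew symmetry from alternating -/
theorem skew (B : LinearMap.BilinForm F V) (halt : ∀ v, B v v = 0) (x y : V) :
    B y x = - B x y := by
  have h := halt (x + y)
  simp only [map_add, LinearMap.add_apply, halt x, halt y] at h
  linear_combination h

theorem mem_orth_iff (B : LinearMap.BilinForm F V) (halt : ∀ v, B v v = 0)
    (U : Submodule F V) (v : V) :
    v ∈ B.orthogonal U ↔ ∀ u ∈ U, B v u = 0 := by
  constructor
  · intro h u hu
    have := h u hu
    have h2 : B u v = 0 := this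
    rw [skew B halt v u] at h2
    linear_combination -h2
  · intro h u hu
    have := h u hu
    show B u v = 0
    rw [skew B halt v u, this, neg_zero]

end MOvoidAux

namespace MOvoidAux2
open MOvoidAux

variable {F V : Type} [Field F] [AddCommGroup V] [Module F V]

theorem point_finrank {p : Submodule F V} (hp : p ∈ ProjPoints F V) :
    finrank F p = 1 := by
  obtain ⟨v, hv, rfl⟩ := hp
  exact finrank_span_singleton hv

theorem eq_span_of_mem_point {p : Submodule F V} (hp : p ∈ ProjPoints F V)
    {u : V} (hu : u ∈ p) (hu0 : u ≠ 0) : p = Submodule.span F {u} := by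
  obtain ⟨v, hv, rfl⟩ := hp
  rw [Submodule.mem_span_singleton] at hu
  obtain ⟨c, rfl⟩ := hu
  have hc : c ≠ 0 := by rintro rfl; simp at hu0
  exact (Submodule.span_singleton_smul_eq (Units.mk0 c hc).isUnit v).symm

theorem span_mem_points {u : V} (hu : u ≠ 0) :
    Submodule.span F {u} ∈ ProjPoints F V := ⟨u, hu, rfl⟩

variable [Fintype F] [Fintype V]

open Finset in
theorem card_nonzero (U : Submodule F V) [DecidableEq V] [DecidablePred (· ∈ U)] :
    (Finset.univ.filter (fun v : V => v ∈ U ∧ v ≠ 0)).card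
      = Fintype.card F ^ finrank F U - 1 := by
  classical
  have h1 : Finset.univ.filter (fun v : V => v ∈ U ∧ v ≠ 0)
      = (U : Set V).toFinset \ {0} := by
    ext v; simp [and_comm]
  rw [h1, Finset.card_sdiff_of_subset (by simp [U.zero_mem]), Finset.card_singleton,
    Set.toFinset_card]
  congr 1
  exact card_eq_pow_finrank

open Finset in
theorem card_points_mul (U : Submodule F V) :
    (ProjPoints F V ∩ {p | p ≤ U}).ncard * (Fintype.card F - 1)
      = Fintype.card F ^ finrank F U - 1 := by
  classical
  set T : Finset (Submodule F V) :=
    Finset.univ.filter (fun p => p ∈ ProjPoints F V ∧ p ≤ U) with hT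
  have hset : (ProjPoints F V ∩ {p | p ≤ U}) = ↑T := by
    ext p; simp [hT, Set.mem_inter_iff]
  rw [hset, Set.ncard_coe_finset]
  set A : Finset V := Finset.univ.filter (fun v : V => v ∈ U ∧ v ≠ 0) with hA
  have hfib : ∀ v ∈ A, Submodule.span F {v} ∈ T := by
    intro v hv
    simp only [hA, Finset.mem_filter] at hv
    simp only [hT, Finset.mem_filter]
    exact ⟨Finset.mem_univ _, span_mem_points hv.2.2,
      (Submodule.span_singleton_le_iff_mem v U).2 hv.2.1⟩
  have hcount := Finset.card_eq_sum_card_fiberwise hfib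
  have hfibcard : ∀ p ∈ T, (A.filter (fun v => Submodule.span F {v} = p)).card
      = Fintype.card F - 1 := by
    intro p hp
    simp only [hT, Finset.mem_filter] at hp
    have heq : A.filter (fun v => Submodule.span F {v} = p)
        = Finset.univ.filter (fun v : V => v ∈ p ∧ v ≠ 0) := by
      ext v
      simp only [hA, Finset.filter_filter, Finset.mem_filter, Finset.mem_univ,
        true_and]
      constructor
      · rintro ⟨⟨hvU, hv0⟩, rfl⟩
        exact ⟨Submodule.mem_span_singleton_self v, hv0⟩
      · rintro ⟨hvp, hv0⟩
        exact ⟨⟨hp.2.2 hvp, hv0⟩, (eq_span_of_mem_point hp.2.1 hvp hv0).symm⟩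
    rw [heq, card_nonzero, point_finrank hp.2.1, pow_one]
  rw [Finset.sum_congr rfl hfibcard, Finset.sum_const, smul_eq_mul] at hcount
  rw [← hcount, hA, card_nonzero]

end MOvoidAux2

namespace MOvoidAux3
open MOvoidAux MOvoidAux2

variable {F V : Type} [Field F] [AddCommGroup V] [Module F V]

theorem ti_le_orth {B : LinearMap.BilinForm F V} {G : Submodule F V}
    (hti : TotallyIsotropic B G) : G ≤ B.orthogonal G :=
  fun v hv u hu => hti u hu v hv

theorem ti_finrank_le [FiniteDimensional F V] {B : LinearMap.BilinForm F V}
    (halt : ∀ v, B v v = 0) (hnd : B.Nondegenerate)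
    (U₀ : Submodule F V) (hc : U₀ ⊔ B.orthogonal U₀ = ⊤)
    {G : Submodule F V} (hG : G ≤ U₀) (hti : TotallyIsotropic B G) :
    2 * finrank F G ≤ finrank F U₀ := by
  have hrefl : B.IsRefl := LinearMap.IsAlt.isRefl halt
  have h1 : G ≤ U₀ ⊓ B.orthogonal G := le_inf hG (ti_le_orth hti)
  have h2 : U₀ ⊔ B.orthogonal G = ⊤ :=
    top_unique (hc ▸ sup_le_sup_left (LinearMap.BilinForm.orthogonal_le hG) U₀)
  have h3 := Submodule.finrank_sup_add_finrank_inf_eq U₀ (B.orthogonal G)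
  have h4 : finrank F (B.orthogonal G) = finrank F V - finrank F G :=
    LinearMap.BilinForm.finrank_orthogonal hnd G
  have h5 : finrank F G ≤ finrank F (U₀ ⊓ B.orthogonal G : Submodule F V) :=
    Submodule.finrank_mono h1
  have h6 : finrank F G ≤ finrank F V := Submodule.finrank_le G
  rw [h2, finrank_top, h4] at h3
  omega

theorem exists_lagrangian [FiniteDimensional F V] (B : LinearMap.BilinForm F V)
    (halt : ∀ v, B v v = 0) :
    ∀ k (U : Submodule F V), finrank F U ≤ k →
      (∀ v ∈ U, (∀ w ∈ U, B v w = 0) → v = 0) →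
      ∃ L, L ≤ U ∧ TotallyIsotropic B L ∧ 2 * finrank F L = finrank F U := by
  intro k
  induction k with
  | zero =>
    intro U hU _
    refine ⟨⊥, bot_le, ?_, ?_⟩
    · intro v hv; rw [Submodule.mem_bot] at hv; subst hv; simp
    · rw [finrank_bot]; omega
  | succ k ih =>
    intro U hU hnd
    by_cases hU0 : finrank F U = 0
    · refine ⟨⊥, bot_le, ?_, ?_⟩
      · intro v hv; rw [Submodule.mem_bot] at hv; subst hv; simp
      · rw [finrank_bot]; omega
    · have hUbot : U ≠ ⊥ := by
        intro h; rw [h, finrank_bot] at hU0; exact hU0 rfl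
      obtain ⟨v, hvU, hv0⟩ := Submodule.exists_mem_ne_zero_of_ne_bot hUbot
      have hw : ∃ w ∈ U, B v w ≠ 0 := by
        by_contra h
        push_neg at h
        exact hv0 (hnd v hvU h)
      obtain ⟨w, hwU, hvw⟩ := hw
      have hsk : ∀ x y : V, B y x = - B x y := skew B halt
      have hwv : B w v ≠ 0 := by rw [hsk v w]; simpa using hvw
      set H : Submodule F V := Submodule.span F {v, w} with hH
      set U' : Submodule F V := U ⊓ B.orthogonal H with hU'
      have hvH : v ∈ H := Submodule.subset_span (by simp)
      have hwH : w ∈ H := Submodule.subset_span (by simp)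
      have hHU : H ≤ U := by
        rw [hH, Submodule.span_le]
        rintro x hx
        rcases hx with rfl | hx
        · exact hvU
        · rw [Set.mem_singleton_iff] at hx; subst hx; exact hwU
      have horthH : ∀ x : V, B v x = 0 → B w x = 0 → x ∈ B.orthogonal H := by
        intro x h1 h2 n hn
        have hn' : n ∈ Submodule.span F {v, w} := hn
        rw [Submodule.mem_span_pair] at hn'
        obtain ⟨a, b, rfl⟩ := hn'
        show B (a • v + b • w) x = 0
        simp only [map_add, map_smul, LinearMap.add_apply, LinearMap.smul_apply,
          smul_eq_mul, h1, h2, mul_zero, add_zero]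
      have hdecomp : ∀ x ∈ U,
          x - ((B w x) / (B w v)) • v - ((B v x) / (B v w)) • w ∈ U' := by
        intro x hx
        refine Submodule.mem_inf.2 ⟨?_, ?_⟩
        · exact Submodule.sub_mem _ (Submodule.sub_mem _ hx
            (Submodule.smul_mem _ _ hvU)) (Submodule.smul_mem _ _ hwU)
        · apply horthH
          · simp only [map_sub, map_smul, smul_eq_mul, halt v, mul_zero, sub_zero]
            rw [div_mul_cancel₀ _ hvw, sub_self]
          · simp only [map_sub, map_smul, smul_eq_mul, halt w, mul_zero]
            rw [div_mul_cancel₀ _ hwv, sub_zero, sub_self]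
      have hHU'bot : H ⊓ U' = ⊥ := by
        rw [eq_bot_iff]
        intro x hx
        rw [Submodule.mem_inf] at hx
        obtain ⟨hxH, hxU'⟩ := hx
        have hxorth : x ∈ B.orthogonal H := (Submodule.mem_inf.1 hxU').2
        have hxH' : x ∈ Submodule.span F {v, w} := hxH
        rw [Submodule.mem_span_pair] at hxH'
        obtain ⟨a, b, hab⟩ := hxH'
        have h1 : B v x = 0 := hxorth v hvH
        have h2 : B w x = 0 := hxorth w hwH
        rw [← hab] at h1 h2
        simp only [map_add, map_smul, smul_eq_mul, halt v, halt w, mul_zero, zero_add,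
          add_zero] at h1 h2
        have hb : b = 0 := by
          rcases mul_eq_zero.1 h1 with h | h
          · exact h
          · exact absurd h hvw
        have ha : a = 0 := by
          rcases mul_eq_zero.1 h2 with h | h
          · exact h
          · exfalso; rw [hsk v w] at h; simp at h; exact hvw h
        rw [← hab, ha, hb]
        simp
      have hsup : H ⊔ U' = U := by
        apply le_antisymm
        · exact sup_le hHU inf_le_left
        · intro x hx
          have h := hdecomp x hx
          have heq : (((B w x) / (B w v)) • v + ((B v x) / (B v w)) • w)
              + (x - ((B w x) / (B w v)) • v - ((B v x) / (B v w)) • w) = x := by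
            module
          rw [← heq]
          exact Submodule.add_mem _
            (Submodule.mem_sup_left (Submodule.add_mem _
              (Submodule.smul_mem _ _ hvH) (Submodule.smul_mem _ _ hwH)))
            (Submodule.mem_sup_right h)
      have hvwind : Submodule.span F {v} ⊓ Submodule.span F {w} = ⊥ := by
        rw [eq_bot_iff]
        intro x hx
        rw [Submodule.mem_inf] at hx
        obtain ⟨hx1, hx2⟩ := hx
        rw [Submodule.mem_span_singleton] at hx1 hx2
        obtain ⟨a, rfl⟩ := hx1
        obtain ⟨b, hb⟩ := hx2
        rcases eq_or_ne a 0 with rfl | ha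
        · simp
        · exfalso
          have : v = (a⁻¹ * b) • w := by
            rw [mul_smul, hb, smul_smul, inv_mul_cancel₀ ha, one_smul]
          rw [this] at hvw
          simp [halt w] at hvw
      have hHrank : finrank F H = 2 := by
        have h1 : H = Submodule.span F {v} ⊔ Submodule.span F {w} := by
          rw [hH, ← Submodule.span_union, Set.singleton_union]
        have h2 := Submodule.finrank_sup_add_finrank_inf_eq
          (Submodule.span F {v}) (Submodule.span F {w})
        rw [hvwind, finrank_bot, finrank_span_singleton hv0,
          finrank_span_singleton (fun h => by rw [h] at hvw; simp at hvw)] at h2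
        rw [h1]
        omega
      have hU'rank : finrank F U' + 2 = finrank F U := by
        have h2 := Submodule.finrank_sup_add_finrank_inf_eq H U'
        rw [hHU'bot, finrank_bot, hsup, hHrank] at h2
        omega
      have hU'nd : ∀ x ∈ U', (∀ y ∈ U', B x y = 0) → x = 0 := by
        intro x hxU' hall
        obtain ⟨hxU, hxorth⟩ := Submodule.mem_inf.1 hxU'
        apply hnd x hxU
        intro y hy
        have hvx : B v x = 0 := hxorth v hvH
        have hwx : B w x = 0 := hxorth w hwH
        have hxv : B x v = 0 := by rw [hsk v x, hvx, neg_zero]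
        have hxw : B x w = 0 := by rw [hsk w x, hwx, neg_zero]
        have hxy' := hall _ (hdecomp y hy)
        simp only [map_sub, map_smul, smul_eq_mul, hxv, hxw, mul_zero, sub_zero] at hxy'
        exact hxy'
      obtain ⟨L', hL'le, hL'ti, hL'rank⟩ := ih U' (by omega) hU'nd
      refine ⟨Submodule.span F {v} ⊔ L', ?_, ?_, ?_⟩
      · exact sup_le ((Submodule.span_singleton_le_iff_mem v U).2 hvU)
          (hL'le.trans inf_le_left)
      · intro x hx y hy
        obtain ⟨p, hp, r, hr, rfl⟩ := Submodule.mem_sup.1 hx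
        obtain ⟨p', hp', r', hr', rfl⟩ := Submodule.mem_sup.1 hy
        obtain ⟨a, rfl⟩ := Submodule.mem_span_singleton.1 hp
        obtain ⟨a', rfl⟩ := Submodule.mem_span_singleton.1 hp'
        have hrorth := (Submodule.mem_inf.1 (hL'le hr)).2
        have hr'orth := (Submodule.mem_inf.1 (hL'le hr')).2
        have h1 : B v r' = 0 := hr'orth v hvH
        have h2 : B r v = 0 := by rw [hsk v r, hrorth v hvH, neg_zero]
        have expand : B (a • v + r) (a' • v + r')
            = a * (a' * B v v) + a * B v r' + a' * B r v + B r r' := by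
          simp only [map_add, map_smul, LinearMap.add_apply, LinearMap.smul_apply,
            smul_eq_mul]
          ring
        rw [expand, halt v, h1, h2, hL'ti r hr r' hr']
        ring
      · have hbot : Submodule.span F {v} ⊓ L' = ⊥ := by
          rw [eq_bot_iff]
          intro x hx
          rw [Submodule.mem_inf] at hx
          obtain ⟨hx1, hx2⟩ := hx
          obtain ⟨a, rfl⟩ := Submodule.mem_span_singleton.1 hx1
          have horth := (Submodule.mem_inf.1 (hL'le hx2)).2
          have hav : B w (a • v) = 0 := horth w hwH
          rw [map_smul, smul_eq_mul] at hav
          rcases mul_eq_zero.1 hav with h | h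
          · rw [h, zero_smul]; exact Submodule.zero_mem ⊥
          · exfalso; rw [hsk v w] at h; simp at h; exact hvw h
        have h2 := Submodule.finrank_sup_add_finrank_inf_eq (Submodule.span F {v}) L'
        rw [hbot, finrank_bot, finrank_span_singleton hv0] at h2
        omega

end MOvoidAux3

namespace MOvoidAux4
open MOvoidAux MOvoidAux2 MOvoidAux3

variable {F V : Type} [Field F] [AddCommGroup V] [Module F V]

/-- symplectic transvection -/
def tv (B : LinearMap.BilinForm F V) (a : V) (c : F) : V →ₗ[F] V :=
  LinearMap.id + c • ((B.flip a).smulRight a)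

theorem tv_apply (B : LinearMap.BilinForm F V) (a : V) (c : F) (x : V) :
    tv B a c x = x + (c * B x a) • a := by
  simp [tv, LinearMap.smulRight_apply, smul_smul]

theorem tv_tv (B : LinearMap.BilinForm F V) (halt : ∀ v, B v v = 0)
    (a : V) (c : F) (x : V) : tv B a c (tv B a (-c) x) = x := by
  have hBa : B (x + (-c * B x a) • a) a = B x a := by
    simp only [map_add, map_smul, LinearMap.add_apply, LinearMap.smul_apply,
      smul_eq_mul, halt a, mul_zero, add_zero]
  rw [tv_apply, tv_apply, hBa]
  module

/-- symplectic transvection as an equivalence -/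
noncomputable def tve (B : LinearMap.BilinForm F V) (halt : ∀ v, B v v = 0)
    (a : V) (c : F) : V ≃ₗ[F] V :=
  LinearEquiv.ofLinear (tv B a c) (tv B a (-c))
    (by ext x; exact tv_tv B halt a c x)
    (by ext x; simpa using tv_tv B halt a (-c) x)

theorem tve_apply (B : LinearMap.BilinForm F V) (halt : ∀ v, B v v = 0)
    (a : V) (c : F) (x : V) : tve B halt a c x = x + (c * B x a) • a :=
  tv_apply B a c x

theorem tve_symm_apply (B : LinearMap.BilinForm F V) (halt : ∀ v, B v v = 0)
    (a : V) (c : F) (x : V) : (tve B halt a c).symm x = x + (-c * B x a) • a := by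
  show tv B a (-c) x = _
  exact tv_apply B a (-c) x

theorem tve_form (B : LinearMap.BilinForm F V) (halt : ∀ v, B v v = 0)
    (a : V) (c : F) (x y : V) :
    B (tve B halt a c x) (tve B halt a c y) = B x y := by
  rw [tve_apply, tve_apply]
  have hsk := skew B halt
  simp only [map_add, map_smul, LinearMap.add_apply, LinearMap.smul_apply,
    smul_eq_mul, halt a, mul_zero, add_zero]
  rw [hsk y a]
  ring

/-- one transvection step -/
theorem step (B : LinearMap.BilinForm F V) (halt : ∀ v, B v v = 0)
    (U₀ : Submodule F V) {u v : V} (hu : u ∈ U₀) (hv : v ∈ U₀)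
    (huv : B u v ≠ 0) :
    ∃ e : V ≃ₗ[F] V, (∀ x y, B (e x) (e y) = B x y) ∧ e u = v ∧
      (∀ x ∈ U₀, e x ∈ U₀) ∧ (∀ x ∈ U₀, e.symm x ∈ U₀) := by
  refine ⟨tve B halt (v - u) (B u v)⁻¹, tve_form B halt _ _, ?_, ?_, ?_⟩
  · rw [tve_apply]
    have h1 : B u (v - u) = B u v := by rw [map_sub, halt u, sub_zero]
    rw [h1, inv_mul_cancel₀ huv, one_smul]
    abel
  · intro x hx
    rw [tve_apply]
    exact Submodule.add_mem _ hx (Submodule.smul_mem _ _ (Submodule.sub_mem _ hv hu))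
  · intro x hx
    rw [tve_symm_apply]
    exact Submodule.add_mem _ hx (Submodule.smul_mem _ _ (Submodule.sub_mem _ hv hu))

theorem exists_symp_equiv (B : LinearMap.BilinForm F V) (halt : ∀ v, B v v = 0)
    (U₀ : Submodule F V) (hnd : ∀ v ∈ U₀, (∀ w ∈ U₀, B v w = 0) → v = 0)
    {u v : V} (hu : u ∈ U₀) (hu0 : u ≠ 0) (hv : v ∈ U₀) (hv0 : v ≠ 0) :
    ∃ e : V ≃ₗ[F] V, (∀ x y, B (e x) (e y) = B x y) ∧ e u = v ∧
      (∀ x ∈ U₀, e x ∈ U₀) ∧ (∀ x ∈ U₀, e.symm x ∈ U₀) := by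
  by_cases huv : B u v ≠ 0
  · exact step B halt U₀ hu hv huv
  push_neg at huv
  -- find w with B u w ≠ 0 and B v w ≠ 0
  have h1 : ∃ w1 ∈ U₀, B u w1 ≠ 0 := by
    by_contra h; push_neg at h; exact hu0 (hnd u hu h)
  have h2 : ∃ w2 ∈ U₀, B v w2 ≠ 0 := by
    by_contra h; push_neg at h; exact hv0 (hnd v hv h)
  obtain ⟨w1, hw1U, hw1⟩ := h1
  obtain ⟨w2, hw2U, hw2⟩ := h2
  have hw : ∃ w ∈ U₀, B u w ≠ 0 ∧ B v w ≠ 0 := by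
    by_cases hc1 : B v w1 ≠ 0
    · exact ⟨w1, hw1U, hw1, hc1⟩
    by_cases hc2 : B u w2 ≠ 0
    · exact ⟨w2, hw2U, hc2, hw2⟩
    push_neg at hc1 hc2
    refine ⟨w1 + w2, Submodule.add_mem _ hw1U hw2U, ?_, ?_⟩
    · rw [map_add, hc2, add_zero]; exact hw1
    · rw [map_add, hc1, zero_add]; exact hw2
  obtain ⟨w, hwU, huw, hvw⟩ := hw
  have hwv : B w v ≠ 0 := by
    rw [skew B halt v w]; simpa using hvw
  obtain ⟨e1, he1B, he1u, he1U, he1U'⟩ := step B halt U₀ hu hwU huw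
  obtain ⟨e2, he2B, he2u, he2U, he2U'⟩ := step B halt U₀ hwU hv hwv
  refine ⟨e1.trans e2, ?_, ?_, ?_, ?_⟩
  · intro x y
    show B (e2 (e1 x)) (e2 (e1 y)) = B x y
    rw [he2B, he1B]
  · show e2 (e1 u) = v
    rw [he1u, he2u]
  · intro x hx
    exact he2U _ (he1U x hx)
  · intro x hx
    exact he1U' _ (he2U' x hx)

theorem map_symm_map (e : V ≃ₗ[F] V) (p : Submodule F V) :
    Submodule.map e.toLinearMap (Submodule.map e.symm.toLinearMap p) = p := by
  ext x
  rw [Submodule.mem_map]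
  constructor
  · rintro ⟨y, hy, rfl⟩
    rw [Submodule.mem_map] at hy
    obtain ⟨z, hz, rfl⟩ := hy
    simpa using hz
  · intro hx
    exact ⟨e.symm x, Submodule.mem_map_of_mem hx, by simp⟩

/-- the number of `k`-dimensional totally isotropic subspaces of `U₀` through a
nonzero vector of `U₀` does not depend on the vector -/
theorem deg_const [FiniteDimensional F V] (B : LinearMap.BilinForm F V)
    (halt : ∀ v, B v v = 0) (U₀ : Submodule F V)
    (hnd : ∀ v ∈ U₀, (∀ w ∈ U₀, B v w = 0) → v = 0) (k : ℕ)
    {u v : V} (hu : u ∈ U₀) (hu0 : u ≠ 0) (hv : v ∈ U₀) (hv0 : v ≠ 0) :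
    {G : Submodule F V | (G ≤ U₀ ∧ TotallyIsotropic B G ∧ finrank F G = k) ∧
        u ∈ G}.ncard =
    {G : Submodule F V | (G ≤ U₀ ∧ TotallyIsotropic B G ∧ finrank F G = k) ∧
        v ∈ G}.ncard := by
  obtain ⟨e, heB, heu, heU, heU'⟩ := exists_symp_equiv B halt U₀ hnd hu hu0 hv hv0
  have heB' : ∀ x y, B (e.symm x) (e.symm y) = B x y := by
    intro x y
    have := heB (e.symm x) (e.symm y)
    simp at this
    exact this.symm
  have himg : (Submodule.map e.toLinearMap) ''
      {G : Submodule F V | (G ≤ U₀ ∧ TotallyIsotropic B G ∧ finrank F G = k) ∧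
        u ∈ G} =
      {G : Submodule F V | (G ≤ U₀ ∧ TotallyIsotropic B G ∧ finrank F G = k) ∧
        v ∈ G} := by
    ext G'
    constructor
    · rintro ⟨G, ⟨⟨hGle, hGti, hGrank⟩, hGu⟩, rfl⟩
      refine ⟨⟨?_, ?_, ?_⟩, ?_⟩
      · rintro x hx
        rw [Submodule.mem_map] at hx
        obtain ⟨y, hy, rfl⟩ := hx
        exact heU y (hGle hy)
      · rintro x hx y hy
        rw [Submodule.mem_map] at hx hy
        obtain ⟨x', hx', rfl⟩ := hx
        obtain ⟨y', hy', rfl⟩ := hy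
        exact (heB x' y').trans (hGti x' hx' y' hy')
      · rw [LinearEquiv.finrank_map_eq]
        exact hGrank
      · rw [← heu]
        exact Submodule.mem_map_of_mem hGu
    · rintro ⟨⟨hGle, hGti, hGrank⟩, hGv⟩
      refine ⟨Submodule.map e.symm.toLinearMap G', ⟨⟨?_, ?_, ?_⟩, ?_⟩, map_symm_map e G'⟩
      · rintro x hx
        rw [Submodule.mem_map] at hx
        obtain ⟨y, hy, rfl⟩ := hx
        exact heU' y (hGle hy)
      · rintro x hx y hy
        rw [Submodule.mem_map] at hx hy
        obtain ⟨x', hx', rfl⟩ := hx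
        obtain ⟨y', hy', rfl⟩ := hy
        exact (heB' x' y').trans (hGti x' hx' y' hy')
      · rw [LinearEquiv.finrank_map_eq]
        exact hGrank
      · have : e.symm v ∈ Submodule.map e.symm.toLinearMap G' :=
          Submodule.mem_map_of_mem hGv
        rwa [← heu, LinearEquiv.symm_apply_apply] at this
        
  have hinj : Function.Injective
      (Submodule.map (e.toLinearMap) : Submodule F V → Submodule F V) :=
    Submodule.map_injective_of_injective e.injective
  rw [← himg, Set.ncard_image_of_injective _ hinj]

end MOvoidAux4

namespace MOvoidMain
open MOvoidAux MOvoidAux2 MOvoidAux3 MOvoidAux4 Finset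

/-- generic double counting --/
theorem double_count {α β : Type} (s : Finset α) (t : Finset β) (r : α → β → Prop)
    [DecidablePred fun z : α × β => r z.1 z.2]
    [∀ a, DecidablePred (r a)] [∀ b, DecidablePred (r · b)] :
    ∑ a ∈ s, (t.filter (r a)).card = ∑ b ∈ t, (s.filter (r · b)).card := by
  classical
  have h1 : ∑ a ∈ s, (t.filter (r a)).card = ∑ a ∈ s, ∑ b ∈ t, if r a b then 1 else 0 := by
    refine Finset.sum_congr rfl fun a _ => ?_
    rw [Finset.card_filter]
  have h2 : ∑ b ∈ t, (s.filter (r · b)).card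
      = ∑ b ∈ t, ∑ a ∈ s, if r a b then 1 else 0 := by
    refine Finset.sum_congr rfl fun b _ => ?_
    rw [Finset.card_filter]
  rw [h1, h2, Finset.sum_comm]

variable {F V : Type} [Field F] [Fintype F] [AddCommGroup V] [Module F V]
  [Fintype V] [FiniteDimensional F V]

open Module Set

set_option maxHeartbeats 2000000 in
theorem main_aux {q n m : ℕ} (hq : Fintype.card F = q) (hn : 2 ≤ n) (hm : 1 ≤ m)
    (hdimV : finrank F V = 2 * n + 2)
    (B : LinearMap.BilinForm F V)
    (halt : ∀ v : V, B v v = 0)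
    (hnd : ∀ v : V, (∀ w, B v w = 0) → v = 0)
    (O : Set (Submodule F V))
    (hO : IsSympMOvoid B m O)
    (W : Submodule F V)
    (hWdim : finrank F W = 2 * n)
    (hWnd : ∀ v ∈ W, (∀ w ∈ W, B v w = 0) → v = 0) :
    (O ∩ {p | p ≤ B.orthogonal W}).ncard ≤ q + 1 ∧
      ((O ∩ {p | p ≤ W}).ncard : ℤ) =
        ((m : ℤ) - ((O ∩ {p | p ≤ B.orthogonal W}).ncard : ℤ)) * (q : ℤ) ^ (n - 1)
          + (m : ℤ) := by
  classical
  letI : Fintype (Submodule F V) := Fintype.ofFinite _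
  have hsk : ∀ x y : V, B y x = - B x y := skew B halt
  have hrefl : B.IsRefl := LinearMap.IsAlt.isRefl halt
  have hndB : B.Nondegenerate := (LinearMap.IsRefl.nondegenerate_iff_separatingLeft hrefl).2 hnd
  have hq1 : 1 ≤ q := by
    rw [← hq]; exact Fintype.card_pos
  have hq2 : 2 ≤ q := by
    rw [← hq]; exact Fintype.one_lt_card
  -- basic structure of W and its perp
  have hperpdim : finrank F (B.orthogonal W) = 2 := by
    rw [LinearMap.BilinForm.finrank_orthogonal hndB W, hdimV, hWdim]
    omega
  have hWinf : W ⊓ B.orthogonal W = ⊥ := by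
    rw [eq_bot_iff]
    intro x hx
    rw [Submodule.mem_inf] at hx
    obtain ⟨hx1, hx2⟩ := hx
    have : x = 0 := by
      apply hWnd x hx1
      intro w hw
      rw [hsk w x, hx2 w hw, neg_zero]
    simp [this]
  have hWsup : W ⊔ B.orthogonal W = ⊤ := by
    apply Submodule.eq_top_of_finrank_eq
    have h1 := Submodule.finrank_sup_add_finrank_inf_eq W (B.orthogonal W)
    rw [hWinf, finrank_bot, hWdim, hperpdim] at h1
    rw [hdimV]
    omega
  -- generators are exactly the (n+1)-dimensional totally isotropic spaces
  have hbound : ∀ G : Submodule F V, TotallyIsotropic B G → finrank F G ≤ n + 1 := by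
    intro G hti
    have := ti_finrank_le halt hndB ⊤ (by simp) le_top hti
    rw [finrank_top, hdimV] at this
    omega
  obtain ⟨L, -, hLti, hLrank⟩ :=
    exists_lagrangian B halt (finrank F V) ⊤ (by rw [finrank_top]) (fun v _ h => hnd v fun w => h w Submodule.mem_top)
  rw [finrank_top, hdimV] at hLrank
  have hLrank' : finrank F L = n + 1 := by omega
  have hgen : ∀ G : Submodule F V,
      IsSympGenerator B G ↔ (TotallyIsotropic B G ∧ finrank F G = n + 1) := by
    intro G
    constructor
    · rintro ⟨hti, hmax⟩
      refine ⟨hti, le_antisymm (hbound G hti) ?_⟩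
      rw [← hLrank']
      exact hmax L hLti
    · rintro ⟨hti, hrank⟩
      exact ⟨hti, fun G' hti' => by rw [hrank]; exact hbound G' hti'⟩
  -- max t.i. subspaces of W have dimension n
  have hboundW : ∀ G : Submodule F V, G ≤ W → TotallyIsotropic B G → finrank F G ≤ n := by
    intro G hle hti
    have := ti_finrank_le halt hndB W hWsup hle hti
    rw [hWdim] at this
    omega
  obtain ⟨LW, hLWle, hLWti, hLWrank⟩ :=
    exists_lagrangian B halt (finrank F W) W le_rfl hWnd
  rw [hWdim] at hLWrank
  have hLWrank' : finrank F LW = n := by omega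
  -- Finsets
  set Pall : Finset (Submodule F V) :=
    univ.filter (fun p => p ∈ ProjPoints F V ∧ p ≤ (⊤ : Submodule F V)) with hPall
  set PW : Finset (Submodule F V) :=
    univ.filter (fun p => p ∈ ProjPoints F V ∧ p ≤ W) with hPW
  set Pperp : Finset (Submodule F V) :=
    univ.filter (fun p => p ∈ ProjPoints F V ∧ p ≤ B.orthogonal W) with hPperp
  set GVF : Finset (Submodule F V) :=
    univ.filter (fun G => G ≤ (⊤ : Submodule F V) ∧ TotallyIsotropic B G ∧
      finrank F G = n + 1) with hGVF
  set GWF : Finset (Submodule F V) :=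
    univ.filter (fun G => G ≤ W ∧ TotallyIsotropic B G ∧ finrank F G = n) with hGWF
  set OF : Finset (Submodule F V) := O.toFinset with hOF
  -- counting points in a subspace
  have hcount : ∀ U : Submodule F V,
      (univ.filter (fun p => p ∈ ProjPoints F V ∧ p ≤ U)).card * (q - 1) + 1
        = q ^ finrank F U := by
    intro U
    have h1 := card_points_mul (F := F) (V := V) U
    have hset : (ProjPoints F V ∩ {p | p ≤ U})
        = ↑(univ.filter (fun p => p ∈ ProjPoints F V ∧ p ≤ U)) := by
      ext p; simp [Set.mem_inter_iff]
    rw [hset, Set.ncard_coe_finset, hq] at h1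
    have hpow : 1 ≤ q ^ finrank F U := Nat.one_le_pow _ _ (by omega)
    omega
  -- conversion of ovoid counts
  have hOconv : ∀ U : Submodule F V,
      (O ∩ {p | p ≤ U}).ncard = (OF.filter (· ≤ U)).card := by
    intro U
    rw [← Set.ncard_coe_finset]
    congr 1
    ext p
    simp [hOF, Set.mem_inter_iff]
  -- degrees
  have hLWbot : LW ≠ ⊥ := by
    intro h; rw [h, finrank_bot] at hLWrank'; omega
  obtain ⟨w₀, hw₀LW, hw₀0⟩ := Submodule.exists_mem_ne_zero_of_ne_bot hLWbot
  have hw₀W : w₀ ∈ W := hLWle hw₀LW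
  set dW : ℕ := {G : Submodule F V | (G ≤ W ∧ TotallyIsotropic B G ∧
      finrank F G = n) ∧ w₀ ∈ G}.ncard with hdW
  have hs2f : ∀ (P : Submodule F V → Prop) (inst : DecidablePred P),
      (@Finset.filter _ P inst univ).card = {G : Submodule F V | P G}.ncard := by
    intro P inst
    rw [← Set.ncard_coe_finset]
    congr 1
    ext x
    simp
  have hdWconst : ∀ u ∈ W, u ≠ 0 →
      {G : Submodule F V | (G ≤ W ∧ TotallyIsotropic B G ∧
        finrank F G = n) ∧ u ∈ G}.ncard = dW := by
    intro u hu hu0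
    rw [hdW]
    exact deg_const B halt W hWnd n hu hu0 hw₀W hw₀0
  have hdWpos : 1 ≤ dW := by
    rw [hdW]
    exact (Set.ncard_pos (Set.toFinite _)).2 ⟨LW, ⟨hLWle, hLWti, hLWrank'⟩, hw₀LW⟩
  have hLbot : L ≠ ⊥ := by
    intro h; rw [h, finrank_bot] at hLrank'; omega
  obtain ⟨u₀, hu₀L, hu₀0⟩ := Submodule.exists_mem_ne_zero_of_ne_bot hLbot
  set dV : ℕ := {G : Submodule F V | (G ≤ (⊤ : Submodule F V) ∧
      TotallyIsotropic B G ∧ finrank F G = n + 1) ∧ u₀ ∈ G}.ncard with hdV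
  have hndT : ∀ v ∈ (⊤ : Submodule F V), (∀ w ∈ (⊤ : Submodule F V), B v w = 0) → v = 0 :=
    fun v _ h => hnd v fun w => h w Submodule.mem_top
  have hdVconst : ∀ u : V, u ≠ 0 →
      {G : Submodule F V | (G ≤ (⊤ : Submodule F V) ∧ TotallyIsotropic B G ∧
        finrank F G = n + 1) ∧ u ∈ G}.ncard = dV := by
    intro u hu0
    rw [hdV]
    exact deg_const B halt ⊤ hndT (n + 1) Submodule.mem_top hu0 Submodule.mem_top hu₀0
  have hdVpos : 1 ≤ dV := by
    rw [hdV]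
    exact (Set.ncard_pos (Set.toFinite _)).2 ⟨L, ⟨le_top, hLti, hLrank'⟩, hu₀L⟩
  -- per-point degree counts
  have hdegV : ∀ p : Submodule F V, p ∈ ProjPoints F V →
      (GVF.filter (fun G => p ≤ G)).card = dV := by
    intro p hp
    obtain ⟨u, hu0, rfl⟩ := hp
    have hfe : GVF.filter (fun G => Submodule.span F {u} ≤ G)
        = univ.filter (fun G => (G ≤ (⊤ : Submodule F V) ∧ TotallyIsotropic B G ∧
            finrank F G = n + 1) ∧ u ∈ G) := by
      ext G
      simp only [hGVF, Finset.filter_filter, Finset.mem_filter, Finset.mem_univ, true_and,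
        Submodule.span_singleton_le_iff_mem]
    rw [hfe, hs2f]
    exact hdVconst u hu0
  have hdegW : ∀ p : Submodule F V, p ∈ ProjPoints F V → p ≤ W →
      (GWF.filter (fun G => p ≤ G)).card = dW := by
    intro p hp hpW
    obtain ⟨u, hu0, rfl⟩ := hp
    have huW : u ∈ W := hpW (Submodule.mem_span_singleton_self u)
    have hfe : GWF.filter (fun G => Submodule.span F {u} ≤ G)
        = univ.filter (fun G => (G ≤ W ∧ TotallyIsotropic B G ∧
            finrank F G = n) ∧ u ∈ G) := by
      ext G
      simp only [hGWF, Finset.filter_filter, Finset.mem_filter, Finset.mem_univ, true_and,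
        Submodule.span_singleton_le_iff_mem]
    rw [hfe, hs2f]
    exact hdWconst u huW hu0
  -- points per generator
  set kV : ℕ := (Pall.filter (· ≤ L)).card with hkV
  have hgenV' : ∀ G0 : Submodule F V, finrank F G0 = n + 1 →
      (Pall.filter (· ≤ G0)).card * (q - 1) + 1 = q ^ (n + 1) := by
    intro G0 hG0
    have hfe : Pall.filter (· ≤ G0)
        = univ.filter (fun p => p ∈ ProjPoints F V ∧ p ≤ G0) := by
      ext p
      simp only [hPall, Finset.filter_filter, Finset.mem_filter, Finset.mem_univ, true_and,
        le_top, true_and, and_true]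
    rw [hfe, hcount G0, hG0]
  have hkVE : kV * (q - 1) + 1 = q ^ (n + 1) := hgenV' L hLrank'
  have hkVG : ∀ G0 : Submodule F V, finrank F G0 = n + 1 →
      (Pall.filter (· ≤ G0)).card = kV := by
    intro G0 hG0
    have h1 := hgenV' G0 hG0
    refine Nat.eq_of_mul_eq_mul_right (by omega : 0 < q - 1) ?_
    exact Nat.add_right_cancel (h1.trans hkVE.symm)
  set kW : ℕ := (PW.filter (· ≤ LW)).card with hkW
  have hgenW' : ∀ G0 : Submodule F V, G0 ≤ W → finrank F G0 = n →
      (PW.filter (· ≤ G0)).card * (q - 1) + 1 = q ^ n := by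
    intro G0 hG0le hG0
    have hfe : PW.filter (· ≤ G0)
        = univ.filter (fun p => p ∈ ProjPoints F V ∧ p ≤ G0) := by
      ext p
      simp only [hPW, Finset.filter_filter, Finset.mem_filter, Finset.mem_univ, true_and]
      constructor
      · rintro ⟨⟨h1, _⟩, h3⟩; exact ⟨h1, h3⟩
      · rintro ⟨h1, h3⟩; exact ⟨⟨h1, h3.trans hG0le⟩, h3⟩
    rw [hfe, hcount G0, hG0]
  have hkWE : kW * (q - 1) + 1 = q ^ n := hgenW' LW hLWle hLWrank'
  have hkWG : ∀ G0 : Submodule F V, G0 ≤ W → finrank F G0 = n →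
      (PW.filter (· ≤ G0)).card = kW := by
    intro G0 hG0le hG0
    have h1 := hgenW' G0 hG0le hG0
    refine Nat.eq_of_mul_eq_mul_right (by omega : 0 < q - 1) ?_
    exact Nat.add_right_cancel (h1.trans hkWE.symm)
  -- total point counts
  have hE3 : Pall.card * (q - 1) + 1 = q ^ (2 * n + 2) := by
    have h := hcount ⊤
    rw [finrank_top, hdimV] at h
    exact h
  have hE7 : PW.card * (q - 1) + 1 = q ^ (2 * n) := by
    have h := hcount W
    rw [hWdim] at h
    exact h
  have hE8 : Pperp.card * (q - 1) + 1 = q ^ 2 := by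
    have h := hcount (B.orthogonal W)
    rw [hperpdim] at h
    exact h
  -- double counts
  have hE1 : GVF.card * kV = Pall.card * dV := by
    have hdc := double_count GVF Pall (fun G p => p ≤ G)
    have hLf : ∀ G ∈ GVF, (Pall.filter (fun p => p ≤ G)).card = kV := by
      intro G hG
      simp only [hGVF, Finset.mem_filter, Finset.mem_univ, true_and] at hG
      exact hkVG G hG.2.2
    have hRf : ∀ p ∈ Pall, (GVF.filter (fun G => p ≤ G)).card = dV := by
      intro p hp
      simp only [hPall, Finset.mem_filter, Finset.mem_univ, true_and] at hp
      exact hdegV p hp.1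
    rw [Finset.sum_congr rfl hLf, Finset.sum_congr rfl hRf, Finset.sum_const,
      Finset.sum_const, smul_eq_mul, smul_eq_mul] at hdc
    exact hdc
  have hE4 : GVF.card * m = OF.card * dV := by
    have hdc := double_count GVF OF (fun G p => p ≤ G)
    have hLf : ∀ G ∈ GVF, (OF.filter (fun p => p ≤ G)).card = m := by
      intro G hG
      simp only [hGVF, Finset.mem_filter, Finset.mem_univ, true_and] at hG
      have hg : IsSympGenerator B G := (hgen G).2 ⟨hG.2.1, hG.2.2⟩
      have h := hO.2 G hg
      rwa [hOconv G] at h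
    have hRf : ∀ p ∈ OF, (GVF.filter (fun G => p ≤ G)).card = dV := by
      intro p hp
      exact hdegV p (hO.1 (Set.mem_toFinset.1 hp))
    rw [Finset.sum_congr rfl hLf, Finset.sum_congr rfl hRf, Finset.sum_const,
      Finset.sum_const, smul_eq_mul, smul_eq_mul] at hdc
    exact hdc
  have hE5 : GWF.card * kW = PW.card * dW := by
    have hdc := double_count GWF PW (fun G p => p ≤ G)
    have hLf : ∀ G ∈ GWF, (PW.filter (fun p => p ≤ G)).card = kW := by
      intro G hG
      simp only [hGWF, Finset.mem_filter, Finset.mem_univ, true_and] at hG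
      exact hkWG G hG.1 hG.2.2
    have hRf : ∀ p ∈ PW, (GWF.filter (fun G => p ≤ G)).card = dW := by
      intro p hp
      simp only [hPW, Finset.mem_filter, Finset.mem_univ, true_and] at hp
      exact hdegW p hp.1 hp.2
    rw [Finset.sum_congr rfl hLf, Finset.sum_congr rfl hRf, Finset.sum_const,
      Finset.sum_const, smul_eq_mul, smul_eq_mul] at hdc
    exact hdc
  -- nontriviality of points
  have hptbot : ∀ p : Submodule F V, p ∈ ProjPoints F V → p ≠ ⊥ := by
    intro p hp h
    have h1 := point_finrank hp
    rw [h, finrank_bot] at h1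
    omega
  have hdisj : ∀ p : Submodule F V, p ∈ ProjPoints F V → p ≤ W →
      p ≤ B.orthogonal W → False := by
    intro p hp h1 h2
    have h3 : p ≤ ⊥ := by rw [← hWinf]; exact le_inf h1 h2
    exact hptbot p hp (le_bot_iff.1 h3)
  -- sup of a perp point and a max t.i. of W is a generator
  have hsupgen : ∀ P ∈ Pperp, ∀ G' ∈ GWF, TotallyIsotropic B (P ⊔ G') ∧
      finrank F (P ⊔ G' : Submodule F V) = n + 1 := by
    intro P hP G' hG'
    simp only [hPperp, Finset.mem_filter, Finset.mem_univ, true_and] at hP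
    simp only [hGWF, Finset.mem_filter, Finset.mem_univ, true_and] at hG'
    obtain ⟨hPproj, hPle⟩ := hP
    obtain ⟨hG'le, hG'ti, hG'rank⟩ := hG'
    constructor
    · intro a ha b hb
      obtain ⟨p, hp, g, hg, rfl⟩ := Submodule.mem_sup.1 ha
      obtain ⟨p', hp', g', hg', rfl⟩ := Submodule.mem_sup.1 hb
      have h1 : B p p' = 0 := by
        obtain ⟨u, hu0, hPspan⟩ := hPproj
        rw [hPspan] at hp hp'
        obtain ⟨a1, rfl⟩ := Submodule.mem_span_singleton.1 hp
        obtain ⟨a2, rfl⟩ := Submodule.mem_span_singleton.1 hp'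
        simp only [map_smul, LinearMap.smul_apply, smul_eq_mul, halt u, mul_zero]
      have h2 : B p g' = 0 := by
        have h := (hPle hp) g' (hG'le hg')
        rw [hsk g' p, h, neg_zero]
      have h3 : B g p' = 0 := (hPle hp') g (hG'le hg)
      have h4 : B g g' = 0 := hG'ti g hg g' hg'
      simp only [map_add, LinearMap.add_apply, h1, h2, h3, h4, add_zero]
    · have hinf : P ⊓ G' = ⊥ := by
        have h : P ⊓ G' ≤ ⊥ := by
          refine (inf_le_inf hPle hG'le).trans ?_
          rw [inf_comm, hWinf]
        exact le_bot_iff.1 h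
      have h2 := Submodule.finrank_sup_add_finrank_inf_eq P G'
      rw [hinf, finrank_bot, point_finrank hPproj, hG'rank] at h2
      omega
  -- partition of the ovoid
  set cW : ℕ := (OF.filter (fun Q => Q ≤ W)).card with hcW
  set cP : ℕ := (OF.filter (fun Q => Q ≤ B.orthogonal W)).card with hcP
  set yy : ℕ := (OF.filter (fun Q => ¬ Q ≤ W ∧ ¬ Q ≤ B.orthogonal W)).card with hyy
  have hprojOF : ∀ Q ∈ OF, Q ∈ ProjPoints F V := fun Q hQ => hO.1 (Set.mem_toFinset.1 hQ)
  have hfilt3 : (OF.filter (fun Q => ¬ Q ≤ W)).filter (fun Q => Q ≤ B.orthogonal W)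
      = OF.filter (fun Q => Q ≤ B.orthogonal W) := by
    rw [Finset.filter_filter]
    apply Finset.filter_congr
    intro Q hQ
    constructor
    · rintro ⟨_, h⟩; exact h
    · intro h; exact ⟨fun hW => hdisj Q (hprojOF Q hQ) hW h, h⟩
  have hfilt4 : (OF.filter (fun Q => ¬ Q ≤ W)).filter (fun Q => ¬ Q ≤ B.orthogonal W)
      = OF.filter (fun Q => ¬ Q ≤ W ∧ ¬ Q ≤ B.orthogonal W) := by
    rw [Finset.filter_filter]
  have hE10 : OF.card = cW + cP + yy := by
    have h1 := Finset.card_filter_add_card_filter_not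
      (s := OF) (p := fun Q => Q ≤ W)
    have h2 := Finset.card_filter_add_card_filter_not
      (s := OF.filter (fun Q => ¬ Q ≤ W)) (p := fun Q => Q ≤ B.orthogonal W)
    rw [hfilt3, hfilt4] at h2
    omega
  -- per-point pair count
  have hperQ : ∀ Q ∈ OF, ((Pperp ×ˢ GWF).filter (fun z => Q ≤ z.1 ⊔ z.2)).card
      = (if Q ≤ W then Pperp.card else 1) *
        (if Q ≤ B.orthogonal W then GWF.card else dW) := by
    intro Q hQ
    have hQproj : Q ∈ ProjPoints F V := hprojOF Q hQ
    obtain ⟨x, hx0, rfl⟩ := hQproj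
    have hxT : x ∈ W ⊔ B.orthogonal W := by rw [hWsup]; exact Submodule.mem_top
    obtain ⟨wc, hwc, uc, huc, hxdec⟩ := Submodule.mem_sup.1 hxT
    have huniq : ∀ y1 ∈ W, ∀ y2 ∈ B.orthogonal W, y1 + y2 = x → y1 = wc ∧ y2 = uc := by
      intro y1 hy1 y2 hy2 hsum
      have hmem : y1 - wc ∈ W ⊓ B.orthogonal W := by
        refine Submodule.mem_inf.2 ⟨Submodule.sub_mem _ hy1 hwc, ?_⟩
        have heq : y1 - wc = uc - y2 :=
          sub_eq_sub_iff_add_eq_add.2 ((hsum.trans hxdec.symm).trans (add_comm wc uc))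
        rw [heq]
        exact Submodule.sub_mem _ huc hy2
      rw [hWinf, Submodule.mem_bot, sub_eq_zero] at hmem
      refine ⟨hmem, ?_⟩
      have h5 : y1 + y2 = y1 + uc := by rw [hsum, ← hxdec, hmem]
      exact add_left_cancel h5
    have hkey : ∀ P G' : Submodule F V, P ≤ B.orthogonal W → G' ≤ W →
        (Submodule.span F {x} ≤ P ⊔ G' ↔ uc ∈ P ∧ wc ∈ G') := by
      intro P G' hPle hG'le
      rw [Submodule.span_singleton_le_iff_mem]
      constructor
      · intro hmem
        obtain ⟨p, hp, g, hg, hpg⟩ := Submodule.mem_sup.1 hmem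
        obtain ⟨h1, h2⟩ := huniq g (hG'le hg) p (hPle hp) (by rw [add_comm]; exact hpg)
        exact ⟨h2 ▸ hp, h1 ▸ hg⟩
      · rintro ⟨h1, h2⟩
        rw [← hxdec]
        exact Submodule.add_mem _ (Submodule.mem_sup_right h2) (Submodule.mem_sup_left h1)
    have hfilter : ((Pperp ×ˢ GWF).filter (fun z => Submodule.span F {x} ≤ z.1 ⊔ z.2))
        = (Pperp.filter (fun P => uc ∈ P)) ×ˢ (GWF.filter (fun G' => wc ∈ G')) := by
      ext z
      simp only [Finset.mem_filter, Finset.mem_product]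
      constructor
      · rintro ⟨⟨hz1, hz2⟩, hle⟩
        have hz1' : z.1 ≤ B.orthogonal W := by
          have h := hz1
          simp only [hPperp, Finset.mem_filter, Finset.mem_univ, true_and] at h
          exact h.2
        have hz2' : z.2 ≤ W := by
          have h := hz2
          simp only [hGWF, Finset.mem_filter, Finset.mem_univ, true_and] at h
          exact h.1
        obtain ⟨hu, hw⟩ := (hkey z.1 z.2 hz1' hz2').1 hle
        exact ⟨⟨hz1, hu⟩, hz2, hw⟩
      · rintro ⟨⟨hz1, hu⟩, hz2, hw⟩
        have hz1' : z.1 ≤ B.orthogonal W := by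
          have h := hz1
          simp only [hPperp, Finset.mem_filter, Finset.mem_univ, true_and] at h
          exact h.2
        have hz2' : z.2 ≤ W := by
          have h := hz2
          simp only [hGWF, Finset.mem_filter, Finset.mem_univ, true_and] at h
          exact h.1
        exact ⟨⟨hz1, hz2⟩, (hkey z.1 z.2 hz1' hz2').2 ⟨hu, hw⟩⟩
    rw [hfilter, Finset.card_product]
    have hGconst : wc ∈ W → wc ≠ 0 → (GWF.filter (fun G' => wc ∈ G')).card = dW := by
      intro hwcW hwc0
      have hfe : GWF.filter (fun G' => wc ∈ G')
          = univ.filter (fun G => (G ≤ W ∧ TotallyIsotropic B G ∧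
              finrank F G = n) ∧ wc ∈ G) := by
        ext G
        simp only [hGWF, Finset.filter_filter, Finset.mem_filter, Finset.mem_univ, true_and]
      rw [hfe, hs2f]
      exact hdWconst wc hwcW hwc0
    by_cases hyW : Submodule.span F {x} ≤ W
    · have hxW : x ∈ W := hyW (Submodule.mem_span_singleton_self x)
      have huc0 : uc = 0 := ((huniq x hxW 0 (Submodule.zero_mem _) (add_zero x)).2).symm
      have hnperp : ¬ Submodule.span F {x} ≤ B.orthogonal W :=
        fun h => hdisj _ (span_mem_points hx0) hyW h
      rw [if_pos hyW, if_neg hnperp]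
      have hPfull : Pperp.filter (fun P => uc ∈ P) = Pperp :=
        Finset.filter_true_of_mem (fun P _ => by rw [huc0]; exact Submodule.zero_mem P)
      have hwcx : wc = x := by
        have := hxdec
        rw [huc0, add_zero] at this
        exact this
      rw [hPfull, hGconst (by rw [hwcx]; exact hxW) (by rw [hwcx]; exact hx0)]
    · have huc0 : uc ≠ 0 := by
        intro h
        apply hyW
        rw [Submodule.span_singleton_le_iff_mem, ← hxdec, h, add_zero]
        exact hwc
      have hPone : (Pperp.filter (fun P => uc ∈ P)).card = 1 := by
        rw [Finset.card_eq_one]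
        refine ⟨Submodule.span F {uc}, ?_⟩
        ext P
        simp only [Finset.mem_filter, Finset.mem_singleton]
        constructor
        · rintro ⟨hP, hucP⟩
          have h := hP
          simp only [hPperp, Finset.mem_filter, Finset.mem_univ, true_and] at h
          exact eq_span_of_mem_point h.1 hucP huc0
        · rintro rfl
          refine ⟨?_, Submodule.mem_span_singleton_self uc⟩
          simp only [hPperp, Finset.mem_filter, Finset.mem_univ, true_and]
          exact ⟨span_mem_points huc0, (Submodule.span_singleton_le_iff_mem _ _).2 huc⟩
      rw [if_neg hyW, hPone]
      by_cases hyP : Submodule.span F {x} ≤ B.orthogonal W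
      · have hxP : x ∈ B.orthogonal W := hyP (Submodule.mem_span_singleton_self x)
        have hwc0 : wc = 0 :=
          ((huniq 0 (Submodule.zero_mem _) x hxP (zero_add x)).1).symm
        have hGfull : GWF.filter (fun G' => wc ∈ G') = GWF :=
          Finset.filter_true_of_mem (fun G _ => by rw [hwc0]; exact Submodule.zero_mem G)
        rw [if_pos hyP, hGfull, one_mul]
      · have hwc0 : wc ≠ 0 := by
          intro h
          apply hyP
          rw [Submodule.span_singleton_le_iff_mem, ← hxdec, h, zero_add]
          exact huc
        rw [if_neg hyP, hGconst hwc hwc0, one_mul]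
  -- the main double count over pairs
  have hE9 : Pperp.card * GWF.card * m
      = cW * (Pperp.card * dW) + (cP * GWF.card + yy * dW) := by
    have hdc := double_count (Pperp ×ˢ GWF) OF (fun z Q => Q ≤ z.1 ⊔ z.2)
    have hLf : ∀ z ∈ Pperp ×ˢ GWF, (OF.filter (fun Q => Q ≤ z.1 ⊔ z.2)).card = m := by
      intro z hz
      rw [Finset.mem_product] at hz
      obtain ⟨hti, hrank⟩ := hsupgen z.1 hz.1 z.2 hz.2
      have hg : IsSympGenerator B (z.1 ⊔ z.2) := (hgen _).2 ⟨hti, hrank⟩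
      have h := hO.2 _ hg
      rwa [hOconv] at h
    rw [Finset.sum_congr rfl hLf, Finset.sum_const, smul_eq_mul,
      Finset.card_product] at hdc
    rw [Finset.sum_congr rfl hperQ] at hdc
    rw [← Finset.sum_filter_add_sum_filter_not OF (fun Q => Q ≤ W)] at hdc
    rw [← Finset.sum_filter_add_sum_filter_not (OF.filter (fun Q => ¬ Q ≤ W))
      (fun Q => Q ≤ B.orthogonal W), hfilt3, hfilt4] at hdc
    have hs1 : ∀ Q ∈ OF.filter (fun Q => Q ≤ W),
        (if Q ≤ W then Pperp.card else 1) *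
          (if Q ≤ B.orthogonal W then GWF.card else dW) = Pperp.card * dW := by
      intro Q hQ
      rw [Finset.mem_filter] at hQ
      rw [if_pos hQ.2, if_neg (fun h => hdisj Q (hprojOF Q hQ.1) hQ.2 h)]
    have hs2 : ∀ Q ∈ OF.filter (fun Q => Q ≤ B.orthogonal W),
        (if Q ≤ W then Pperp.card else 1) *
          (if Q ≤ B.orthogonal W then GWF.card else dW) = GWF.card := by
      intro Q hQ
      rw [Finset.mem_filter] at hQ
      rw [if_neg (fun h => hdisj Q (hprojOF Q hQ.1) h hQ.2), if_pos hQ.2, one_mul]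
    have hs3 : ∀ Q ∈ OF.filter (fun Q => ¬ Q ≤ W ∧ ¬ Q ≤ B.orthogonal W),
        (if Q ≤ W then Pperp.card else 1) *
          (if Q ≤ B.orthogonal W then GWF.card else dW) = dW := by
      intro Q hQ
      rw [Finset.mem_filter] at hQ
      rw [if_neg hQ.2.1, if_neg hQ.2.2, one_mul]
    rw [Finset.sum_congr rfl hs1, Finset.sum_congr rfl hs2, Finset.sum_congr rfl hs3,
      Finset.sum_const, Finset.sum_const, Finset.sum_const, smul_eq_mul, smul_eq_mul,
      smul_eq_mul] at hdc
    exact hdc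
  -- conversions to the statement's quantities
  have hxcW : (O ∩ {p | p ≤ W}).ncard = cW := hOconv W
  have hxcP : (O ∩ {p | p ≤ B.orthogonal W}).ncard = cP := hOconv (B.orthogonal W)
  -- integer versions
  have hE1z : ((GVF.card : ℤ)) * kV = (Pall.card : ℤ) * dV := by exact_mod_cast hE1
  have hE4z : ((GVF.card : ℤ)) * m = (OF.card : ℤ) * dV := by exact_mod_cast hE4
  have hE5z : ((GWF.card : ℤ)) * kW = (PW.card : ℤ) * dW := by exact_mod_cast hE5
  have hE9z : (Pperp.card : ℤ) * GWF.card * m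
      = cW * ((Pperp.card : ℤ) * dW) + (cP * (GWF.card : ℤ) + yy * dW) := by
    exact_mod_cast hE9
  have hkVEz : (kV : ℤ) * ((q : ℤ) - 1) + 1 = (q : ℤ) ^ (n + 1) := by
    have h := hkVE; zify [hq1] at h; exact h
  have hkWEz : (kW : ℤ) * ((q : ℤ) - 1) + 1 = (q : ℤ) ^ n := by
    have h := hkWE; zify [hq1] at h; exact h
  have hE3z : (Pall.card : ℤ) * ((q : ℤ) - 1) + 1 = (q : ℤ) ^ (2 * n + 2) := by
    have h := hE3; zify [hq1] at h; exact h
  have hE7z : (PW.card : ℤ) * ((q : ℤ) - 1) + 1 = (q : ℤ) ^ (2 * n) := by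
    have h := hE7; zify [hq1] at h; exact h
  have hE8z : (Pperp.card : ℤ) * ((q : ℤ) - 1) + 1 = (q : ℤ) ^ 2 := by
    have h := hE8; zify [hq1] at h; exact h
  have hQ2 : (2 : ℤ) ≤ (q : ℤ) := by exact_mod_cast hq2
  have hdVz : (0 : ℤ) < (dV : ℤ) := by exact_mod_cast hdVpos
  have hdWz : (0 : ℤ) < (dW : ℤ) := by exact_mod_cast hdWpos
  have hQP : (1 : ℤ) < (q : ℤ) ^ (n + 1) := by
    calc (1 : ℤ) < 2 := one_lt_two
    _ ≤ (q : ℤ) := hQ2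
    _ ≤ (q : ℤ) ^ (n + 1) := le_self_pow₀ (by linarith) (by omega)
  have hQn : (1 : ℤ) < (q : ℤ) ^ n := by
    calc (1 : ℤ) < 2 := one_lt_two
    _ ≤ (q : ℤ) := hQ2
    _ ≤ (q : ℤ) ^ n := le_self_pow₀ (by linarith) (by omega)
  -- size of the ovoid
  have h0 : ((OF.card : ℤ) * ((q : ℤ) ^ (n + 1) - 1)) * dV
      = (((q : ℤ) ^ (2 * n + 2) - 1) * m) * dV := by
    linear_combination (-((OF.card : ℤ) * dV)) * hkVEz + ((m : ℤ) * dV) * hE3z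
      + (-(((q : ℤ) - 1) * kV)) * hE4z + (((q : ℤ) - 1) * (m : ℤ)) * hE1z
  have h0' := mul_right_cancel₀ (ne_of_gt hdVz) h0
  have hfac : (q : ℤ) ^ (2 * n + 2) = (q : ℤ) ^ (n + 1) * (q : ℤ) ^ (n + 1) := by
    rw [show 2 * n + 2 = (n + 1) + (n + 1) by omega, pow_add]
  have h1 : (OF.card : ℤ) * ((q : ℤ) ^ (n + 1) - 1)
      = (((q : ℤ) ^ (n + 1) + 1) * m) * ((q : ℤ) ^ (n + 1) - 1) := by
    linear_combination h0' + (m : ℤ) * hfac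
  have hocz : (OF.card : ℤ) = ((q : ℤ) ^ (n + 1) + 1) * m :=
    mul_right_cancel₀ (by linarith) h1
  -- W side ratio
  have hgd : (GWF.card : ℤ) * ((q : ℤ) ^ n - 1) = ((q : ℤ) ^ (2 * n) - 1) * dW := by
    linear_combination (-(GWF.card : ℤ)) * hkWEz + (dW : ℤ) * hE7z
      + ((q : ℤ) - 1) * hE5z
  -- perp line size
  have htz : (Pperp.card : ℤ) = (q : ℤ) + 1 := by
    have h : ((Pperp.card : ℤ) - ((q : ℤ) + 1)) * ((q : ℤ) - 1) = 0 := by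
      linear_combination hE8z
    rcases mul_eq_zero.1 h with h' | h'
    · linarith [sub_eq_zero.1 h']
    · linarith
  have hyz : (yy : ℤ) = (OF.card : ℤ) - cW - cP := by
    have h := hE10; zify at h; linarith
  -- eliminate dW
  have h11 : (Pperp.card : ℤ) * m * ((q : ℤ) ^ (2 * n) - 1) * dW
      = ((cW : ℤ) * Pperp.card * ((q : ℤ) ^ n - 1) + cP * ((q : ℤ) ^ (2 * n) - 1)
          + yy * ((q : ℤ) ^ n - 1)) * dW := by
    linear_combination ((q : ℤ) ^ n - 1) * hE9z
      - ((Pperp.card : ℤ) * m - cP) * hgd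
  have h12 := mul_right_cancel₀ (ne_of_gt hdWz) h11
  rw [htz, hyz, hocz] at h12
  -- power decompositions
  have ep1 : (q : ℤ) ^ n = (q : ℤ) ^ (n - 1) * (q : ℤ) := by
    rw [show n = (n - 1) + 1 by omega, pow_succ]
    rw [show n - 1 + 1 - 1 = n - 1 by omega]
  have ep2 : (q : ℤ) ^ (n + 1) = (q : ℤ) ^ (n - 1) * (q : ℤ) ^ 2 := by
    rw [show n + 1 = (n - 1) + 2 by omega, pow_add]
  have ep3 : (q : ℤ) ^ (2 * n) = ((q : ℤ) ^ (n - 1) * (q : ℤ) ^ (n - 1)) * (q : ℤ) ^ 2 := by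
    rw [show 2 * n = ((n - 1) + (n - 1)) + 2 by omega, pow_add, pow_add]
  rw [ep2, ep3] at h12
  rw [ep1] at h12
  have hQn' : (1 : ℤ) < (q : ℤ) ^ (n - 1) * (q : ℤ) := by rw [← ep1]; exact hQn
  have hfac0 : (q : ℤ) * ((q : ℤ) ^ (n - 1) * (q : ℤ) - 1) ≠ 0 := by
    have hpos : (0 : ℤ) < (q : ℤ) * ((q : ℤ) ^ (n - 1) * (q : ℤ) - 1) :=
      mul_pos (by linarith) (by linarith)
    exact ne_of_gt hpos
  have X : (cW : ℤ) * ((q : ℤ) * ((q : ℤ) ^ (n - 1) * (q : ℤ) - 1))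
      = (((m : ℤ) - cP) * (q : ℤ) ^ (n - 1) + m)
          * ((q : ℤ) * ((q : ℤ) ^ (n - 1) * (q : ℤ) - 1)) := by
    linear_combination -h12
  have hfinal := mul_right_cancel₀ hfac0 X
  constructor
  · have hsub : OF.filter (fun Q => Q ≤ B.orthogonal W) ⊆ Pperp := by
      intro Q hQ
      rw [Finset.mem_filter] at hQ
      simp only [hPperp, Finset.mem_filter, Finset.mem_univ, true_and]
      exact ⟨hprojOF Q hQ.1, hQ.2⟩
    have hle := Finset.card_le_card hsub
    have hpc : Pperp.card = q + 1 := by exact_mod_cast htz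
    rw [hxcP]
    omega
  · rw [hxcW, hxcP]
    exact hfinal

end MOvoidMain

/-- Intersection pattern of an `m`-ovoid of `W(2n+1,q)` with an embedded `W(2n-1,q)`:
if `c` is the number of its points in `W^⊥`, then `0 ≤ c ≤ q+1` and the number of its
points in `W` is `(m-c)q^(n-1)+m`. -/
theorem mOvoid_symplectic_intersection_pattern
    {q n m : ℕ} (hqpp : IsPrimePow q) (hn : 2 ≤ n)
    {F : Type} [Field F] [Fintype F] (hcard : Fintype.card F = q)
    (B : LinearMap.BilinForm F (Fin (2 * n + 2) → F))
    (halt : ∀ v : Fin (2 * n + 2) → F, B v v = 0)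
    (hnd : ∀ v : Fin (2 * n + 2) → F, (∀ w, B v w = 0) → v = 0)
    (O : Set (Submodule F (Fin (2 * n + 2) → F)))
    (hm : 1 ≤ m)
    (hO : IsSympMOvoid B m O)
    (W : Submodule F (Fin (2 * n + 2) → F))
    (hWdim : Module.finrank F W = 2 * n)
    (hWnd : ∀ v ∈ W, (∀ w ∈ W, B v w = 0) → v = 0) :
    (O ∩ {p | p ≤ B.orthogonal W}).ncard ≤ q + 1 ∧
      ((O ∩ {p | p ≤ W}).ncard : ℤ) =
        ((m : ℤ) - ((O ∩ {p | p ≤ B.orthogonal W}).ncard : ℤ)) * (q : ℤ) ^ (n - 1)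
          + (m : ℤ) := by
  have hdim : Module.finrank F (Fin (2 * n + 2) → F) = 2 * n + 2 :=
    Module.finrank_fin_fun F
  exact MOvoidMain.main_aux hcard hn hm hdim B halt hnd O hO W hWdim hWnd
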